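/- There is a polynomial p such that every formula F provable in CL5⁻ of size (length) k has a CL5⁻ proof whose size is at most p(k). -/

import Mathlib

namespace CirquentCalc

/-- Formulas: literals (negation applied only to atoms), ∧, ∨. -/
inductive Fml where
  | pos : ℕ → Fml
  | neg : ℕ → Fml
  | and : Fml → Fml → Fml
  | or : Fml → Fml → Fml
deriving DecidableEq

namespace Fml

/-- Negation (pushed to atoms, as ¬ applies only to atoms). -/
def negate : Fml → Fml
  | pos n => neg n
  | neg n => pos n
  | and a b => or a.negate b.negate
  | or a b => and a.negate b.negate

/-- Substitution extended homomorphically. -/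
def subst (σ : ℕ → Fml) : Fml → Fml
  | pos n => σ n
  | neg n => (σ n).negate
  | and a b => and (a.subst σ) (b.subst σ)
  | or a b => or (a.subst σ) (b.subst σ)

/-- Classical evaluation under a truth assignment. -/
def eval (v : ℕ → Bool) : Fml → Bool
  | pos n => v n
  | neg n => !(v n)
  | and a b => a.eval v && b.eval v
  | or a b => a.eval v || b.eval v

/-- Number of positive occurrences of atom `a`. -/
def cPos (a : ℕ) : Fml → ℕ
  | pos n => if n = a then 1 else 0
  | neg _ => 0
  | and f g => f.cPos a + g.cPos a
  | or f g => f.cPos a + g.cPos a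

/-- Number of negative occurrences of atom `a`. -/
def cNeg (a : ℕ) : Fml → ℕ
  | pos _ => 0
  | neg n => if n = a then 1 else 0
  | and f g => f.cNeg a + g.cNeg a
  | or f g => f.cNeg a + g.cNeg a

/-- Total number of positive occurrences of atoms. -/
def posOcc : Fml → ℕ
  | pos _ => 1
  | neg _ => 0
  | and f g => f.posOcc + g.posOcc
  | or f g => f.posOcc + g.posOcc

/-- Length: total number of occurrences of literals and connectives. -/
def len : Fml → ℕ
  | pos _ => 1
  | neg _ => 1
  | and f g => f.len + g.len + 1
  | or f g => f.len + g.len + 1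

/-- Number of occurrences of ∧. -/
def nAnd : Fml → ℕ
  | pos _ => 0
  | neg _ => 0
  | and f g => f.nAnd + g.nAnd + 1
  | or f g => f.nAnd + g.nAnd

/-- Number of occurrences of ∨. -/
def nOr : Fml → ℕ
  | pos _ => 0
  | neg _ => 0
  | and f g => f.nOr + g.nOr
  | or f g => f.nOr + g.nOr + 1

end Fml

def Tautology (A : Fml) : Prop := ∀ v, A.eval v = true

/-- No atom has more than two occurrences. -/
def Binary (A : Fml) : Prop := ∀ a, A.cPos a + A.cNeg a ≤ 2

/-- Whenever an atom occurs twice, one occurrence is positive and one negative. -/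
def Normal (A : Fml) : Prop := ∀ a, A.cPos a ≤ 1 ∧ A.cNeg a ≤ 1

def AtomicLevel (σ : ℕ → Fml) : Prop := ∀ n, ∃ m, σ n = Fml.pos m

/-- `F` is an instance of `B`: σ(B) = F for some substitution σ. -/
def InstanceOf (F B : Fml) : Prop := ∃ σ, B.subst σ = F

/-- `F` is an atomic-level instance of `B`. -/
def AtomicInstanceOf (F B : Fml) : Prop := ∃ σ, AtomicLevel σ ∧ B.subst σ = F

/-- A cirquent: a pool of (occurrences of) formulas, and a list of ogroups,
each an (index-)set of oformulas of the pool. -/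
structure Cirquent where
  pool : List Fml
  groups : List (Finset ℕ)

def emptyCirquent : Cirquent := ⟨[], []⟩

def idCirquent (F : Fml) : Cirquent := ⟨[F.negate, F], [{0, 1}]⟩

/-- The cirquent with pool ⟨F⟩ and one ogroup containing F. -/
def fmlCirquent (F : Fml) : Cirquent := ⟨[F], [{0}]⟩

/-- Index renaming swapping `i` and `i+1`. -/
def swapIdx (i : ℕ) : ℕ → ℕ := fun j => if j = i then i + 1 else if j = i + 1 then i else j

/-- Index renaming when a new oformula is inserted at position `i`. -/
def insShift (i : ℕ) : ℕ → ℕ := fun j => if j < i then j else j + 1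

/-- Index renaming when the oformulas at positions `i`, `i+1` are merged into one at `i`. -/
def mergeIdx (i : ℕ) : ℕ → ℕ := fun j => if j ≤ i then j else j - 1

/-- Mix: placing the two premise cirquents side by side. -/
def MixStep (A B C : Cirquent) : Prop :=
  C.pool = A.pool ++ B.pool ∧
  C.groups = A.groups ++ B.groups.map (Finset.image (· + A.pool.length))

/-- Oformula exchange: swap two adjacent oformulas, preserving containment. -/
def OfExchStep (P C : Cirquent) : Prop :=
  ∃ (l₁ l₂ : List Fml) (F G : Fml),
    P.pool = l₁ ++ F :: G :: l₂ ∧ C.pool = l₁ ++ G :: F :: l₂ ∧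
    C.groups = P.groups.map (Finset.image (swapIdx l₁.length))

/-- Ogroup exchange: swap two adjacent ogroups. -/
def OgExchStep (P C : Cirquent) : Prop :=
  C.pool = P.pool ∧
  ∃ (g₁ g₂ : List (Finset ℕ)) (Γ Δ : Finset ℕ),
    P.groups = g₁ ++ Γ :: Δ :: g₂ ∧ C.groups = g₁ ++ Δ :: Γ :: g₂

/-- Pool weakening: insert a new oformula, contained in no ogroup. -/
def PoolWeakStep (P C : Cirquent) : Prop :=
  ∃ (l₁ l₂ : List Fml) (F : Fml),
    P.pool = l₁ ++ l₂ ∧ C.pool = l₁ ++ F :: l₂ ∧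
    C.groups = P.groups.map (Finset.image (insShift l₁.length))

/-- Ogroup weakening: add a new arc between a pre-existing ogroup and oformula. -/
def OgWeakStep (P C : Cirquent) : Prop :=
  C.pool = P.pool ∧
  ∃ (g₁ g₂ : List (Finset ℕ)) (Γ : Finset ℕ) (j : ℕ),
    j < P.pool.length ∧ j ∉ Γ ∧
    P.groups = g₁ ++ Γ :: g₂ ∧ C.groups = g₁ ++ insert j Γ :: g₂

/-- Downward duplication: replace an ogroup by two adjacent copies of it. -/
def DupDownStep (P C : Cirquent) : Prop :=
  C.pool = P.pool ∧
  ∃ (g₁ g₂ : List (Finset ℕ)) (Γ : Finset ℕ),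
    P.groups = g₁ ++ Γ :: g₂ ∧ C.groups = g₁ ++ Γ :: Γ :: g₂

/-- Upward duplication: the converse of downward duplication. -/
def DupUpStep (P C : Cirquent) : Prop :=
  C.pool = P.pool ∧
  ∃ (g₁ g₂ : List (Finset ℕ)) (Γ : Finset ℕ),
    P.groups = g₁ ++ Γ :: Γ :: g₂ ∧ C.groups = g₁ ++ Γ :: g₂

/-- ∨-introduction: merge two adjacent oformulas F, G into F ∨ G. -/
def OrIntroStep (P C : Cirquent) : Prop :=
  ∃ (l₁ l₂ : List Fml) (F G : Fml),
    P.pool = l₁ ++ F :: G :: l₂ ∧ C.pool = l₁ ++ (Fml.or F G) :: l₂ ∧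
    C.groups = P.groups.map (Finset.image (mergeIdx l₁.length))

/-- The merging of the ogroup list in ∧-introduction: no ogroup contains both `i`
and `i+1`; every ogroup containing `i` is immediately followed by one containing
`i+1` and vice versa; such pairs are merged. -/
inductive AndMerge (i : ℕ) : List (Finset ℕ) → List (Finset ℕ) → Prop where
  | nil : AndMerge i [] []
  | skip {Γ : Finset ℕ} {l l' : List (Finset ℕ)} :
      i ∉ Γ → (i + 1) ∉ Γ → AndMerge i l l' → AndMerge i (Γ :: l) (Γ :: l')
  | merge {Γ Δ : Finset ℕ} {l l' : List (Finset ℕ)} :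
      i ∈ Γ → (i + 1) ∉ Γ → (i + 1) ∈ Δ → i ∉ Δ →
      AndMerge i l l' → AndMerge i (Γ :: Δ :: l) ((Γ ∪ Δ) :: l')

/-- ∧-introduction. -/
def AndIntroStep (P C : Cirquent) : Prop :=
  ∃ (l₁ l₂ : List Fml) (F G : Fml) (merged : List (Finset ℕ)),
    P.pool = l₁ ++ F :: G :: l₂ ∧ C.pool = l₁ ++ (Fml.and F G) :: l₂ ∧
    AndMerge l₁.length P.groups merged ∧
    C.groups = merged.map (Finset.image (mergeIdx l₁.length))

inductive RuleName where
  | emptyAx | idAx | mix | ofExch | ogExch | poolWeak | ogWeak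
  | dupDown | dupUp | orIntro | andIntro
deriving DecidableEq

/-- The unary (one-premise) rules, by name. -/
def unRel : RuleName → Cirquent → Cirquent → Prop
  | .ofExch => OfExchStep
  | .ogExch => OgExchStep
  | .poolWeak => PoolWeakStep
  | .ogWeak => OgWeakStep
  | .dupDown => DupDownStep
  | .dupUp => DupUpStep
  | .orIntro => OrIntroStep
  | .andIntro => AndIntroStep
  | _ => fun _ _ => False

/-- Proof trees: each node is labeled by its cirquent and the rule used. -/
inductive PTree where
  | leaf (C : Cirquent) (r : RuleName)
  | un (C : Cirquent) (r : RuleName) (p : PTree)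
  | bin (C : Cirquent) (r : RuleName) (p q : PTree)

namespace PTree

def concl : PTree → Cirquent
  | leaf C _ => C
  | un C _ _ => C
  | bin C _ _ _ => C

/-- Validity: each node follows from its children by the named rule. -/
def Valid : PTree → Prop
  | leaf C r =>
      (r = .emptyAx ∧ C = emptyCirquent) ∨ (r = .idAx ∧ ∃ F, C = idCirquent F)
  | un C r p => p.Valid ∧ unRel r p.concl C
  | bin C r p q => p.Valid ∧ q.Valid ∧ r = .mix ∧ MixStep p.concl q.concl C

/-- Number of applications of rule `r` in the proof. -/
def count (r : RuleName) : PTree → ℕ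
  | leaf _ r' => if r' = r then 1 else 0
  | un _ r' p => (if r' = r then 1 else 0) + p.count r
  | bin _ r' p q => (if r' = r then 1 else 0) + p.count r + q.count r

/-- The cirquents occurring in the proof. -/
def cirquents : PTree → List Cirquent
  | leaf C _ => [C]
  | un C _ p => C :: p.cirquents
  | bin C _ p q => C :: (p.cirquents ++ q.cirquents)

/-- Total number of rule applications (nodes). -/
def nodes : PTree → ℕ
  | leaf _ _ => 1
  | un _ _ p => p.nodes + 1
  | bin _ _ p q => p.nodes + q.nodes + 1

/-- Number of leaves of the proof tree. -/
def leavesCount : PTree → ℕ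
  | leaf _ _ => 1
  | un _ _ p => p.leavesCount
  | bin _ _ p q => p.leavesCount + q.leavesCount

end PTree

/-- A proof uses no duplication. -/
def DupFree (p : PTree) : Prop :=
  p.count RuleName.dupDown = 0 ∧ p.count RuleName.dupUp = 0

/-- Provability of a cirquent in CL5. -/
def ProvesC (C : Cirquent) : Prop := ∃ p : PTree, p.Valid ∧ p.concl = C

/-- Provability of a formula in CL5. -/
def ProvesCL5 (F : Fml) : Prop := ∃ p : PTree, p.Valid ∧ p.concl = fmlCirquent F

/-- Provability of a formula in CL5⁻ (CL5 without duplication). -/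
def ProvesCL5m (F : Fml) : Prop :=
  ∃ p : PTree, p.Valid ∧ DupFree p ∧ p.concl = fmlCirquent F

/-- Number of arcs of a cirquent (sum of the sizes of its ogroups). -/
def Cirquent.arcs (C : Cirquent) : ℕ := (C.groups.map Finset.card).sum

/-- Size of a cirquent: sum of the lengths of the oformulas in its pool plus
the sum of the sizes of its ogroups. -/
def Cirquent.size (C : Cirquent) : ℕ := (C.pool.map Fml.len).sum + C.arcs

/-- Size of a proof: the sum of the sizes of the cirquents it contains. -/
def PTree.size (p : PTree) : ℕ := (p.cirquents.map Cirquent.size).sum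

/-- Total number of positive occurrences of atoms in the pool. -/
def Cirquent.poolPosOcc (C : Cirquent) : ℕ := (C.pool.map Fml.posOcc).sum

end CirquentCalc

namespace CirquentCalc

/-! ### Basic helpers -/

theorem Fml.one_le_len (F : Fml) : 1 ≤ F.len := by
  cases F <;> simp [Fml.len] <;> omega

theorem Fml.len_negate (F : Fml) : F.negate.len = F.len := by
  induction F <;> simp [Fml.negate, Fml.len, *]

/-- pool length sum -/
def plen (C : Cirquent) : ℕ := (C.pool.map Fml.len).sum

theorem length_le_plen (l : List Fml) : l.length ≤ (l.map Fml.len).sum := by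
  induction l with
  | nil => simp
  | cons a t ih => simp only [List.map_cons, List.sum_cons, List.length_cons]
                   have := a.one_le_len; omega

theorem getD_map_range (f : ℕ → Fml) (n j : ℕ) (h : j < n) (d : Fml) :
    ((List.range n).map f).getD j d = f j := by
  rw [List.getD_eq_getElem?_getD, List.getElem?_map, List.getElem?_range h]
  rfl

theorem ext_getD (l l' : List Fml) (d : Fml) (hl : l.length = l'.length)
    (h : ∀ j < l.length, l.getD j d = l'.getD j d) : l = l' := by
  induction l generalizing l' with
  | nil => cases l' <;> simp_all
  | cons a t ih =>
    cases l' with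
    | nil => simp_all
    | cons b t' =>
      have h0 := h 0 (by simp)
      simp only [List.getD_cons_zero] at h0
      subst h0
      simp only [List.length_cons, Nat.add_right_cancel_iff] at hl
      refine congrArg _ (ih t' hl fun j hj => ?_)
      have := h (j+1) (by simpa using Nat.succ_lt_succ hj)
      simpa using this

theorem getD3 (l₁ l₂ : List Fml) (a b : Fml) (j : ℕ) (d : Fml) :
    (l₁ ++ a :: b :: l₂).getD j d =
      if j < l₁.length then l₁.getD j d
      else if j = l₁.length then a
      else if j = l₁.length + 1 then b
      else l₂.getD (j - l₁.length - 2) d := by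
  induction l₁ generalizing j with
  | nil =>
    simp only [List.nil_append, List.length_nil]
    match j with
    | 0 => simp
    | 1 => simp
    | (n+2) => simp [List.getD]
  | cons x t ih =>
    match j with
    | 0 => simp
    | (n+1) =>
      simp only [List.cons_append, List.getD_cons_succ, List.length_cons]
      rw [ih]
      have h1 : (n + 1 < t.length + 1) = (n < t.length) := by simp
      by_cases hn : n < t.length
      · simp [hn]
      · simp only [if_neg hn, if_neg (by omega : ¬ n + 1 < t.length + 1)]
        by_cases h2 : n = t.length
        · simp [h2]
        · simp only [if_neg h2, if_neg (by omega : ¬ n + 1 = t.length + 1)]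
          by_cases h3 : n = t.length + 1
          · simp [h3]
          · simp only [if_neg h3, if_neg (by omega : ¬ n + 1 = t.length + 1 + 1)]
            congr 1
            omega

theorem split3 (l : List Fml) (j : ℕ) (d : Fml) (h : j + 1 < l.length) :
    l = l.take j ++ l.getD j d :: l.getD (j+1) d :: l.drop (j+2) := by
  induction l generalizing j with
  | nil => simp at h
  | cons a t ih =>
    match j with
    | 0 =>
      cases t with
      | nil => simp at h
      | cons b t' => simp [List.getD]
    | (n+1) =>
      simp only [List.length_cons] at h
      have := ih n (by omega)
      simp only [List.take_succ_cons, List.getD_cons_succ, List.drop_succ_cons, List.cons_append]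
      exact congrArg _ this

/-! ### Index permutation helpers -/

theorem swapIdx_eq_swap (i : ℕ) : swapIdx i = ⇑(Equiv.swap i (i+1)) := by
  funext j
  simp [swapIdx, Equiv.swap_apply_def]

theorem swapIdx_inj (i : ℕ) : Function.Injective (swapIdx i) := by
  rw [swapIdx_eq_swap]; exact (Equiv.swap i (i+1)).injective

theorem insShift_inj (i : ℕ) : Function.Injective (insShift i) := by
  intro a b h
  simp only [insShift] at h
  split at h <;> split at h <;> omega

def dfl : Fml := Fml.pos 0

/-- Apply a position permutation to a pool. -/
def permPool (σ : Equiv.Perm ℕ) (l : List Fml) : List Fml :=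
  (List.range l.length).map (fun j => l.getD (σ.symm j) dfl)

/-- Apply a position permutation to a cirquent. -/
def applyPerm (σ : Equiv.Perm ℕ) (X : Cirquent) : Cirquent :=
  ⟨permPool σ X.pool, X.groups.map (Finset.image (⇑σ))⟩

@[simp] theorem permPool_length (σ : Equiv.Perm ℕ) (l : List Fml) :
    (permPool σ l).length = l.length := by simp [permPool]

theorem permPool_getD (σ : Equiv.Perm ℕ) (l : List Fml) (j : ℕ) (h : j < l.length) :
    (permPool σ l).getD j dfl = l.getD (σ.symm j) dfl := by
  simp only [permPool]
  rw [getD_map_range _ _ _ h]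

theorem fix_symm {σ : Equiv.Perm ℕ} {n : ℕ} (h : ∀ j, n ≤ j → σ j = j) :
    ∀ j, n ≤ j → σ.symm j = j := by
  intro j hj
  have : σ (σ.symm j) = σ j := by rw [Equiv.apply_symm_apply, h j hj]
  exact σ.injective this

theorem symm_lt {σ : Equiv.Perm ℕ} {n : ℕ} (h : ∀ j, n ≤ j → σ j = j)
    {j : ℕ} (hj : j < n) : σ.symm j < n := by
  by_contra hge
  have h1 : σ (σ.symm j) = σ.symm j := h _ (by omega)
  have h2 : σ (σ.symm j) = j := σ.apply_symm_apply j
  omega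

theorem permPool_one (l : List Fml) : permPool 1 l = l := by
  refine (ext_getD _ _ dfl (by simp) ?_).symm
  intro j hj
  rw [permPool_getD _ _ _ hj]
  rfl

theorem image_one (S : Finset ℕ) : S.image (⇑(1 : Equiv.Perm ℕ)) = S := by
  simp

@[simp] theorem applyPerm_one (X : Cirquent) : applyPerm 1 X = X := by
  cases X with
  | mk pool groups =>
    simp only [applyPerm, permPool_one]
    congr 1
    exact (List.map_congr_left (fun S _ => image_one S)).trans (List.map_id _)

theorem permPool_comp (σ₁ σ₂ : Equiv.Perm ℕ) (l : List Fml)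
    (h₂ : ∀ j, l.length ≤ j → σ₂ j = j) :
    permPool σ₂ (permPool σ₁ l) = permPool (σ₂ * σ₁) l := by
  refine ext_getD _ _ dfl (by simp) ?_
  intro j hj
  simp only [permPool_length] at hj ⊢
  rw [permPool_getD _ _ _ (by simpa using hj), permPool_getD _ _ _ (symm_lt h₂ hj),
    permPool_getD _ _ _ hj]
  rfl

theorem applyPerm_comp (σ₁ σ₂ : Equiv.Perm ℕ) (X : Cirquent)
    (h₂ : ∀ j, X.pool.length ≤ j → σ₂ j = j) :
    applyPerm σ₂ (applyPerm σ₁ X) = applyPerm (σ₂ * σ₁) X := by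
  simp only [applyPerm, permPool_comp σ₁ σ₂ X.pool h₂, List.map_map]
  congr 1
  apply List.map_congr_left
  intro S _
  simp [Function.comp, Finset.image_image]

theorem permPool_swap (l₁ l₂ : List Fml) (a b : Fml) :
    permPool (Equiv.swap l₁.length (l₁.length + 1)) (l₁ ++ a :: b :: l₂)
      = l₁ ++ b :: a :: l₂ := by
  set i := l₁.length with hi
  refine ext_getD _ _ dfl (by simp) ?_
  intro j hj
  simp only [permPool_length] at hj
  rw [permPool_getD _ _ _ hj, Equiv.symm_swap]
  rw [getD3, getD3]
  simp only [← hi]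
  by_cases h1 : j < i
  · rw [Equiv.swap_apply_of_ne_of_ne (by omega) (by omega)]
    simp [h1]
  · by_cases h2 : j = i
    · subst h2
      rw [Equiv.swap_apply_left]
      simp
    · by_cases h3 : j = i + 1
      · subst h3
        rw [Equiv.swap_apply_right]
        simp [hi]
      · rw [Equiv.swap_apply_of_ne_of_ne h2 h3]
        simp [h1, h2, h3]

/-! ### Exchange steps, chains, and permutation data -/

def ExcStep (X Y : Cirquent) : Prop := OfExchStep X Y ∨ OgExchStep X Y

def Reach : Cirquent → Cirquent → Prop := Relation.ReflTransGen ExcStep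

inductive ChainN : ℕ → Cirquent → Cirquent → Prop
  | refl (X) : ChainN 0 X X
  | head {X Z Y : Cirquent} {k : ℕ} : ExcStep X Z → ChainN k Z Y → ChainN (k+1) X Y

theorem ChainN.append {k₁ k₂ : ℕ} {X Z Y : Cirquent}
    (h₁ : ChainN k₁ X Z) (h₂ : ChainN k₂ Z Y) : ChainN (k₁ + k₂) X Y := by
  induction h₁ with
  | refl => simpa using h₂
  | @head A B C k s rest ih =>
      have h3 := ChainN.head s (ih h₂)
      have e : k + 1 + k₂ = k + k₂ + 1 := by omega
      rw [e]
      exact h3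

/-- arcs of mapped groups with injective index map -/
theorem arcs_map_inj (gs : List (Finset ℕ)) (f : ℕ → ℕ) (hf : Function.Injective f) :
    ((gs.map (Finset.image f)).map Finset.card).sum = (gs.map Finset.card).sum := by
  rw [List.map_map]
  congr 1
  apply List.map_congr_left
  intro S _
  exact Finset.card_image_of_injective S hf

theorem excStep_plen {X Y : Cirquent} (h : ExcStep X Y) : plen Y = plen X := by
  rcases h with ⟨l₁, l₂, F, G, hP, hC, _⟩ | ⟨hpool, _⟩
  · simp only [plen, hP, hC, List.map_append, List.sum_append, List.map_cons, List.sum_cons]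
    omega
  · simp [plen, hpool]

theorem excStep_poollen {X Y : Cirquent} (h : ExcStep X Y) :
    Y.pool.length = X.pool.length := by
  rcases h with ⟨l₁, l₂, F, G, hP, hC, _⟩ | ⟨hpool, _⟩
  · simp [hP, hC]
  · simp [hpool]

theorem excStep_arcs {X Y : Cirquent} (h : ExcStep X Y) : Y.arcs = X.arcs := by
  rcases h with ⟨l₁, l₂, F, G, hP, hC, hG⟩ | ⟨hpool, g₁, g₂, Γ, Δ, hP, hC⟩
  · simp only [Cirquent.arcs, hG]
    exact arcs_map_inj _ _ (swapIdx_inj _)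
  · simp only [Cirquent.arcs, hP, hC, List.map_append, List.sum_append, List.map_cons,
      List.sum_cons]
    omega

theorem excStep_size {X Y : Cirquent} (h : ExcStep X Y) : Y.size = X.size := by
  have h1 := excStep_plen h
  have h2 := excStep_arcs h
  simp only [Cirquent.size]
  simp only [plen] at h1
  omega

theorem excStep_glen {X Y : Cirquent} (h : ExcStep X Y) :
    Y.groups.length = X.groups.length := by
  rcases h with ⟨l₁, l₂, F, G, hP, hC, hG⟩ | ⟨hpool, g₁, g₂, Γ, Δ, hP, hC⟩
  · simp [hG]
  · simp [hP, hC]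

/-- Permutation data relating two exchange-equivalent cirquents. -/
def PermRel (X Y : Cirquent) : Prop :=
  ∃ σ : Equiv.Perm ℕ, (∀ j, X.pool.length ≤ j → σ j = j) ∧
    Y.pool = permPool σ X.pool ∧
    (X.groups.map (Finset.image (⇑σ))).Perm Y.groups

theorem PermRel.refl (X : Cirquent) : PermRel X X := by
  refine ⟨1, fun j _ => rfl, (permPool_one X.pool).symm, ?_⟩
  rw [(List.map_congr_left (fun S _ => image_one S)).trans (List.map_id _)]

theorem PermRel.poollen {X Y : Cirquent} (h : PermRel X Y) :
    Y.pool.length = X.pool.length := by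
  obtain ⟨σ, _, hpool, _⟩ := h
  simp [hpool]

theorem PermRel.trans {X Z Y : Cirquent} (h₁ : PermRel X Z) (h₂ : PermRel Z Y) :
    PermRel X Y := by
  obtain ⟨σ₁, hs₁, hp₁, hg₁⟩ := h₁
  obtain ⟨σ₂, hs₂, hp₂, hg₂⟩ := h₂
  have hlen : Z.pool.length = X.pool.length := by simp [hp₁]
  refine ⟨σ₂ * σ₁, ?_, ?_, ?_⟩
  · intro j hj
    have e1 : σ₁ j = j := hs₁ j hj
    have e2 : σ₂ j = j := hs₂ j (by omega)
    simp [Equiv.Perm.mul_apply, e1, e2]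
  · rw [hp₂, hp₁, permPool_comp _ _ _ (fun j hj => hs₂ j (by omega))]
  · have : (X.groups.map (Finset.image (⇑(σ₂ * σ₁)))) =
        (X.groups.map (Finset.image (⇑σ₁))).map (Finset.image (⇑σ₂)) := by
      rw [List.map_map]
      apply List.map_congr_left
      intro S _
      simp [Function.comp, Finset.image_image]
    rw [this]
    exact (hg₁.map _).trans hg₂

theorem excStep_permRel {X Y : Cirquent} (h : ExcStep X Y) : PermRel X Y := by
  rcases h with ⟨l₁, l₂, F, G, hP, hC, hG⟩ | ⟨hpool, g₁, g₂, Γ, Δ, hP, hC⟩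
  · refine ⟨Equiv.swap l₁.length (l₁.length + 1), ?_, ?_, ?_⟩
    · intro j hj
      rw [hP] at hj
      simp only [List.length_append, List.length_cons] at hj
      exact Equiv.swap_apply_of_ne_of_ne (by omega) (by omega)
    · rw [hP, hC, permPool_swap]
    · rw [hG, ← swapIdx_eq_swap]
  · refine ⟨1, fun j _ => rfl, by rw [hpool, permPool_one], ?_⟩
    rw [(List.map_congr_left (fun S _ => image_one S)).trans (List.map_id _), hP, hC]
    exact List.perm_append_left_iff _ |>.2 (List.Perm.swap _ _ _)

theorem reach_permRel {X Y : Cirquent} (h : Reach X Y) : PermRel X Y := by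
  induction h with
  | refl => exact PermRel.refl X
  | tail _ s ih => exact ih.trans (excStep_permRel s)

/-! ### Realization of permutation data by explicit chains -/

def gam : ℕ → ℕ → Equiv.Perm ℕ
  | _, 0 => 1
  | t, (d+1) => gam (t+1) d * Equiv.swap t (t+1)

theorem gam_fix (t d j : ℕ) (h : j < t ∨ t + d < j) : gam t d j = j := by
  induction d generalizing t with
  | zero => rfl
  | succ d ih =>
    simp only [gam, Equiv.Perm.mul_apply]
    rw [Equiv.swap_apply_of_ne_of_ne (by omega) (by omega)]
    exact ih (t+1) (by omega)

theorem gam_apply_t (t d : ℕ) : gam t d t = t + d := by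
  induction d generalizing t with
  | zero => rfl
  | succ d ih =>
    simp only [gam, Equiv.Perm.mul_apply, Equiv.swap_apply_left]
    rw [ih (t+1)]
    omega

theorem swap_step (X : Cirquent) (t : ℕ) (h : t + 1 < X.pool.length) :
    ExcStep X (applyPerm (Equiv.swap t (t+1)) X) := by
  have hlen : (X.pool.take t).length = t := by
    rw [List.length_take]; omega
  refine Or.inl ⟨X.pool.take t, X.pool.drop (t+2), X.pool.getD t dfl, X.pool.getD (t+1) dfl,
    split3 X.pool t dfl h, ?_, ?_⟩
  · have key := permPool_swap (X.pool.take t) (X.pool.drop (t+2))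
      (X.pool.getD t dfl) (X.pool.getD (t+1) dfl)
    rw [hlen] at key
    rw [← split3 X.pool t dfl h] at key
    simpa only [applyPerm] using key
  · show (applyPerm (Equiv.swap t (t+1)) X).groups = _
    simp only [applyPerm]
    rw [hlen, swapIdx_eq_swap]

theorem move (d t : ℕ) (X : Cirquent) (h : t + d < X.pool.length) :
    ChainN d X (applyPerm (gam t d) X) := by
  induction d generalizing t X with
  | zero =>
    exact (applyPerm_one X).symm ▸ ChainN.refl X
  | succ d ih =>
    have h1 : t + 1 < X.pool.length := by omega
    have step := swap_step X t h1
    have hlen : (applyPerm (Equiv.swap t (t+1)) X).pool.length = X.pool.length := by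
      simp [applyPerm]
    have chain := ih (t+1) (applyPerm (Equiv.swap t (t+1)) X) (by omega)
    rw [applyPerm_comp (Equiv.swap t (t+1)) (gam (t+1) d) X
      (fun j hj => gam_fix _ _ _ (by omega))] at chain
    have egam : gam t (d+1) = gam (t+1) d * Equiv.swap t (t+1) := rfl
    rw [egam]
    exact ChainN.head step chain

theorem realizeA (m : ℕ) : ∀ (X : Cirquent) (σ : Equiv.Perm ℕ),
    (∀ j, m ≤ j → σ j = j) → m ≤ X.pool.length →
    ∃ k ≤ m * m, ChainN k X (applyPerm σ X) := by
  induction m with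
  | zero =>
    intro X σ hfix _
    have : σ = 1 := Equiv.ext fun j => hfix j (Nat.zero_le j)
    subst this
    exact ⟨0, le_rfl, by rw [applyPerm_one]; exact ChainN.refl X⟩
  | succ m ih =>
    intro X σ hfix hm
    set t := σ.symm m with ht
    have htm : t ≤ m := by
      by_contra hgt
      have : σ t = t := hfix t (by omega)
      have : σ t = m := by rw [ht, Equiv.apply_symm_apply]
      omega
    have hmlt : m < X.pool.length := by omega
    -- move t to m
    have mv := move (m - t) t X (by omega)
    set γ := gam t (m - t) with hγ
    set X₂ := applyPerm γ X with hX₂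
    have hγfix : ∀ j, m + 1 ≤ j → γ j = j := fun j hj => gam_fix t (m-t) j (by omega)
    have hX₂len : X₂.pool.length = X.pool.length := by simp [hX₂, applyPerm]
    -- residual permutation
    set σ' := σ * γ⁻¹ with hσ'
    have hσ'fix : ∀ j, m ≤ j → σ' j = j := by
      intro j hj
      rcases Nat.eq_or_lt_of_le hj with he | hlt
      · cases he
        have hγm : γ t = m := by
          rw [hγ, gam_apply_t]; omega
        have hinv : γ⁻¹ m = t := by
          rw [← hγm]; exact Equiv.symm_apply_apply γ t
        rw [hσ', Equiv.Perm.mul_apply, hinv, ht, Equiv.apply_symm_apply]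
      · have hfx : γ j = j := hγfix j (by omega)
        have h1 : γ⁻¹ j = j := by
          have h2 : γ⁻¹ (γ j) = j := Equiv.symm_apply_apply γ j
          rwa [hfx] at h2
        rw [hσ', Equiv.Perm.mul_apply, h1]
        exact hfix j (by omega)
    obtain ⟨k₂, hk₂, chain₂⟩ := ih X₂ σ' hσ'fix (by omega)
    have hend : applyPerm σ' X₂ = applyPerm σ X := by
      rw [hX₂, applyPerm_comp _ _ _ (fun j hj => hσ'fix j (by omega)), hσ']
      rw [inv_mul_cancel_right]
    rw [hend] at chain₂
    refine ⟨(m - t) + k₂, ?_, mv.append chain₂⟩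
    have e1 : m - t ≤ m := Nat.sub_le m t
    have e2 : (m+1) * (m+1) = m * m + 2 * m + 1 := by ring
    omega

/-! ### Group-list chains -/

def GStep (l l' : List (Finset ℕ)) : Prop :=
  ∃ g₁ g₂ Γ Δ, l = g₁ ++ Γ :: Δ :: g₂ ∧ l' = g₁ ++ Δ :: Γ :: g₂

inductive GChainN : ℕ → List (Finset ℕ) → List (Finset ℕ) → Prop
  | refl (l) : GChainN 0 l l
  | head {l m l' k} : GStep l m → GChainN k m l' → GChainN (k+1) l l'

theorem GChainN.append {k₁ k₂ l m l'} (h₁ : GChainN k₁ l m) (h₂ : GChainN k₂ m l') :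
    GChainN (k₁ + k₂) l l' := by
  induction h₁ with
  | refl => simpa using h₂
  | @head a b c k s rest ih =>
    have h3 := GChainN.head s (ih h₂)
    have e : k + 1 + k₂ = k + k₂ + 1 := by omega
    rw [e]; exact h3

theorem GChainN.cons {k l l'} (Γ : Finset ℕ) (h : GChainN k l l') :
    GChainN k (Γ :: l) (Γ :: l') := by
  induction h with
  | refl => exact GChainN.refl _
  | @head a b c k s rest ih =>
    obtain ⟨g₁, g₂, A, B, h1, h2⟩ := s
    exact GChainN.head ⟨Γ :: g₁, g₂, A, B, by simp [h1], by simp [h2]⟩ ih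

theorem bubble (g₁ g₂ : List (Finset ℕ)) (Δ : Finset ℕ) :
    GChainN g₁.length (g₁ ++ Δ :: g₂) (Δ :: (g₁ ++ g₂)) := by
  induction g₁ with
  | nil => exact GChainN.refl _
  | cons Γ rest ih =>
    have lift := GChainN.cons Γ ih
    have last : GStep (Γ :: Δ :: (rest ++ g₂)) (Δ :: Γ :: (rest ++ g₂)) :=
      ⟨[], rest ++ g₂, Γ, Δ, rfl, rfl⟩
    have := lift.append (GChainN.head last (GChainN.refl _))
    simpa using this

theorem permB : ∀ (l' l : List (Finset ℕ)), l.Perm l' →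
    ∃ k ≤ l.length * l.length, GChainN k l l' := by
  intro l'
  induction l' with
  | nil =>
    intro l hp
    rw [hp.eq_nil]
    exact ⟨0, by simp, GChainN.refl _⟩
  | cons Δ t' ih =>
    intro l hp
    have hmem : Δ ∈ l := hp.symm.subset (List.mem_cons_self)
    obtain ⟨g₁, g₂, rfl⟩ := List.append_of_mem hmem
    have hperm2 : (g₁ ++ g₂).Perm t' := by
      have h1 : (Δ :: (g₁ ++ g₂)).Perm (Δ :: t') := List.perm_middle.symm.trans hp
      exact h1.cons_inv
    obtain ⟨k₂, hk₂, chain₂⟩ := ih (g₁ ++ g₂) hperm2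
    refine ⟨g₁.length + k₂, ?_, (bubble g₁ g₂ Δ).append (GChainN.cons Δ chain₂)⟩
    have h3 : (g₁ ++ Δ :: g₂).length = g₁.length + g₂.length + 1 := by
      simp only [List.length_append, List.length_cons]; omega
    have h4 : (g₁ ++ g₂).length = g₁.length + g₂.length := by simp
    rw [h3]
    rw [h4] at hk₂
    nlinarith

theorem gchain_chain {k : ℕ} {l l' : List (Finset ℕ)} (P : List Fml)
    (h : GChainN k l l') : ChainN k ⟨P, l⟩ ⟨P, l'⟩ := by
  induction h with
  | refl => exact ChainN.refl _
  | @head a b c k s rest ih =>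
    obtain ⟨g₁, g₂, Γ, Δ, h1, h2⟩ := s
    have step : ExcStep ⟨P, a⟩ ⟨P, b⟩ := Or.inr ⟨rfl, g₁, g₂, Γ, Δ, h1, h2⟩
    exact ChainN.head step ih

/-- Full realization. -/
theorem realize {X Y : Cirquent} (h : PermRel X Y) {N : ℕ}
    (hN1 : X.pool.length ≤ N) (hN2 : X.groups.length ≤ N) :
    ∃ k ≤ 2 * N * N, ChainN k X Y := by
  obtain ⟨σ, hfix, hpool, hgroups⟩ := h
  obtain ⟨k₁, hk₁, chain₁⟩ := realizeA X.pool.length X σ hfix le_rfl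
  have hZpool : (applyPerm σ X).pool = Y.pool := by
    simp only [applyPerm]
    exact hpool.symm
  obtain ⟨k₂, hk₂, chain₂⟩ := permB Y.groups ((applyPerm σ X).groups) (by
    show (X.groups.map (Finset.image (⇑σ))).Perm Y.groups
    exact hgroups)
  have chain₂' : ChainN k₂ (applyPerm σ X) Y := by
    have h1 : (applyPerm σ X) = ⟨Y.pool, (applyPerm σ X).groups⟩ := by
      rw [← hZpool]
    have h2 : Y = (⟨Y.pool, Y.groups⟩ : Cirquent) := rfl
    rw [h1, h2]
    exact gchain_chain _ chain₂
  refine ⟨k₁ + k₂, ?_, chain₁.append chain₂'⟩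
  have hg : (applyPerm σ X).groups.length = X.groups.length := by simp [applyPerm]
  rw [hg] at hk₂
  nlinarith

/-! ### Per-rule structural facts -/

def cw (f : Fml) : ℕ := f.nAnd + f.nOr

def connSum (C : Cirquent) : ℕ := (C.pool.map cw).sum

def WF (C : Cirquent) : Prop := ∀ Γ ∈ C.groups, ∀ j ∈ Γ, j < C.pool.length

theorem AndMerge.length_le {i : ℕ} {l l' : List (Finset ℕ)} (h : AndMerge i l l') :
    l'.length ≤ l.length := by
  induction h with
  | nil => simp
  | skip _ _ _ ih => simpa using Nat.succ_le_succ ih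
  | merge _ _ _ _ _ ih => simp only [List.length_cons]; omega

theorem AndMerge.mem {i : ℕ} {l l' : List (Finset ℕ)} (h : AndMerge i l l') :
    ∀ Γ' ∈ l', ∀ j ∈ Γ', ∃ Γ ∈ l, j ∈ Γ := by
  induction h with
  | nil => simp
  | @skip Γ₀ t t' _ _ _ ih =>
    intro Γ' hΓ' j hj
    rcases List.mem_cons.1 hΓ' with rfl | hm
    · exact ⟨Γ', List.mem_cons_self, hj⟩
    · obtain ⟨Γ, hΓ, hjΓ⟩ := ih Γ' hm j hj
      exact ⟨Γ, List.mem_cons_of_mem _ hΓ, hjΓ⟩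
  | @merge Γ₀ Δ₀ t t' _ _ _ _ _ ih =>
    intro Γ' hΓ' j hj
    rcases List.mem_cons.1 hΓ' with rfl | hm
    · rcases Finset.mem_union.1 hj with h1 | h2
      · exact ⟨Γ₀, List.mem_cons_self, h1⟩
      · exact ⟨Δ₀, List.mem_cons_of_mem _ (List.mem_cons_self), h2⟩
    · obtain ⟨Γ, hΓ, hjΓ⟩ := ih Γ' hm j hj
      exact ⟨Γ, List.mem_cons_of_mem _ (List.mem_cons_of_mem _ hΓ), hjΓ⟩

theorem cw_le_len (f : Fml) : cw f ≤ f.len := by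
  induction f <;> simp [cw, Fml.nAnd, Fml.nOr, Fml.len] at * <;> omega

def pwWt : RuleName → ℕ | .poolWeak => 1 | _ => 0
def oaWt : RuleName → ℕ | .orIntro => 1 | .andIntro => 1 | _ => 0
def ogWt : RuleName → ℕ | .ogWeak => 1 | _ => 0

/-- L4 : pool length sums only grow downward. -/
theorem unRel_plen {r : RuleName} {P C : Cirquent} (hr : unRel r P C) :
    plen P + pwWt r ≤ plen C := by
  cases r <;> simp only [unRel, pwWt, oaWt, ogWt] at hr ⊢
  case ofExch =>
    obtain ⟨l₁, l₂, F, G, hP, hC, _⟩ := hr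
    simp only [plen, hP, hC, List.map_append, List.sum_append, List.map_cons, List.sum_cons]
    omega
  case ogExch =>
    obtain ⟨hpool, _⟩ := hr
    simp [plen, hpool]
  case poolWeak =>
    obtain ⟨l₁, l₂, F, hP, hC, _⟩ := hr
    simp only [plen, hP, hC, List.map_append, List.sum_append, List.map_cons, List.sum_cons]
    have := F.one_le_len
    omega
  case ogWeak =>
    obtain ⟨hpool, _⟩ := hr
    simp [plen, hpool]
  case dupDown =>
    obtain ⟨hpool, _⟩ := hr
    simp [plen, hpool]
  case dupUp =>
    obtain ⟨hpool, _⟩ := hr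
    simp [plen, hpool]
  case orIntro =>
    obtain ⟨l₁, l₂, F, G, hP, hC, _⟩ := hr
    simp only [plen, hP, hC, List.map_append, List.sum_append, List.map_cons, List.sum_cons,
      Fml.len]
    omega
  case andIntro =>
    obtain ⟨l₁, l₂, F, G, merged, hP, hC, _, _⟩ := hr
    simp only [plen, hP, hC, List.map_append, List.sum_append, List.map_cons, List.sum_cons,
      Fml.len]
    omega
  all_goals exact absurd hr not_false

/-- L2 : group counts only shrink downward (no duplication). -/
theorem unRel_glen {r : RuleName} {P C : Cirquent} (hr : unRel r P C)
    (hd : r ≠ RuleName.dupDown) : C.groups.length ≤ P.groups.length := by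
  cases r <;> simp only [unRel, pwWt, oaWt, ogWt] at hr ⊢
  case ofExch =>
    obtain ⟨_, _, _, _, _, _, hG⟩ := hr
    simp [hG]
  case ogExch =>
    obtain ⟨_, g₁, g₂, Γ, Δ, hP, hC⟩ := hr
    simp [hP, hC]
  case poolWeak =>
    obtain ⟨_, _, _, _, _, hG⟩ := hr
    simp [hG]
  case ogWeak =>
    obtain ⟨_, g₁, g₂, Γ, j, _, _, hP, hC⟩ := hr
    simp [hP, hC]
  case dupDown => exact absurd rfl hd
  case dupUp =>
    obtain ⟨_, g₁, g₂, Γ, hP, hC⟩ := hr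
    simp [hP, hC]
  case orIntro =>
    obtain ⟨_, _, _, _, _, _, hG⟩ := hr
    simp [hG]
  case andIntro =>
    obtain ⟨l₁, l₂, F, G, merged, hP, hC, hm, hG⟩ := hr
    rw [hG]
    simpa using hm.length_le
  all_goals exact absurd hr not_false

/-- L3 : connective sums grow downward, strictly for the intro rules. -/
theorem unRel_conn {r : RuleName} {P C : Cirquent} (hr : unRel r P C) :
    connSum P + oaWt r ≤ connSum C := by
  cases r <;> simp only [unRel, pwWt, oaWt, ogWt] at hr ⊢
  case ofExch =>
    obtain ⟨l₁, l₂, F, G, hP, hC, _⟩ := hr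
    simp only [connSum, hP, hC, List.map_append, List.sum_append, List.map_cons, List.sum_cons]
    omega
  case ogExch =>
    obtain ⟨hpool, _⟩ := hr
    simp [connSum, hpool]
  case poolWeak =>
    obtain ⟨l₁, l₂, F, hP, hC, _⟩ := hr
    simp only [connSum, hP, hC, List.map_append, List.sum_append, List.map_cons, List.sum_cons]
    omega
  case ogWeak =>
    obtain ⟨hpool, _⟩ := hr
    simp [connSum, hpool]
  case dupDown =>
    obtain ⟨hpool, _⟩ := hr
    simp [connSum, hpool]
  case dupUp =>
    obtain ⟨hpool, _⟩ := hr
    simp [connSum, hpool]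
  case orIntro =>
    obtain ⟨l₁, l₂, F, G, hP, hC, _⟩ := hr
    simp only [connSum, hP, hC, List.map_append, List.sum_append, List.map_cons, List.sum_cons,
      cw, Fml.nAnd, Fml.nOr]
    omega
  case andIntro =>
    obtain ⟨l₁, l₂, F, G, merged, hP, hC, _, _⟩ := hr
    simp only [connSum, hP, hC, List.map_append, List.sum_append, List.map_cons, List.sum_cons,
      cw, Fml.nAnd, Fml.nOr]
    omega
  all_goals exact absurd hr not_false

/-- L5 : arcs for the non-intro, non-duplication rules. -/
theorem unRel_arcs {r : RuleName} {P C : Cirquent} (hr : unRel r P C)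
    (h1 : r = RuleName.ofExch ∨ r = RuleName.ogExch ∨ r = RuleName.poolWeak ∨
      r = RuleName.ogWeak) :
    C.arcs = P.arcs + ogWt r := by
  rcases h1 with rfl | rfl | rfl | rfl <;> simp only [unRel, ogWt] at hr ⊢
  · obtain ⟨_, _, _, _, _, _, hG⟩ := hr
    simp only [Cirquent.arcs, hG]
    rw [arcs_map_inj _ _ (swapIdx_inj _)]
    simp
  · obtain ⟨_, g₁, g₂, Γ, Δ, hP, hC⟩ := hr
    simp only [Cirquent.arcs, hP, hC, List.map_append, List.sum_append, List.map_cons,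
      List.sum_cons]
    simp
    omega
  · obtain ⟨_, _, _, _, _, hG⟩ := hr
    simp only [Cirquent.arcs, hG]
    rw [arcs_map_inj _ _ (insShift_inj _)]
    simp
  · obtain ⟨_, g₁, g₂, Γ, j, hj, hjΓ, hP, hC⟩ := hr
    simp only [Cirquent.arcs, hP, hC, List.map_append, List.sum_append, List.map_cons,
      List.sum_cons]
    rw [Finset.card_insert_of_notMem hjΓ]
    omega

/-- L6 : well-formedness is preserved downward. -/
theorem unRel_WF {r : RuleName} {P C : Cirquent} (hr : unRel r P C) (hw : WF P) : WF C := by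
  cases r <;> simp only [unRel] at hr
  case ofExch =>
    obtain ⟨l₁, l₂, F, G, hP, hC, hG⟩ := hr
    intro Γ hΓ j hj
    rw [hG] at hΓ
    obtain ⟨Γ₀, hΓ₀, rfl⟩ := List.mem_map.1 hΓ
    obtain ⟨j₀, hj₀, rfl⟩ := Finset.mem_image.1 hj
    have hb := hw Γ₀ hΓ₀ j₀ hj₀
    rw [hP] at hb; rw [hC]
    simp only [List.length_append, List.length_cons] at *
    simp only [swapIdx]
    split
    · omega
    · split <;> omega
  case ogExch =>
    obtain ⟨hpool, g₁, g₂, Γ', Δ', hPG, hCG⟩ := hr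
    intro Γ hΓ j hj
    rw [hCG] at hΓ
    rw [hpool]
    refine hw Γ ?_ j hj
    rw [hPG]
    simp only [List.mem_append, List.mem_cons] at hΓ ⊢
    tauto
  case poolWeak =>
    obtain ⟨l₁, l₂, F, hP, hC, hG⟩ := hr
    intro Γ hΓ j hj
    rw [hG] at hΓ
    obtain ⟨Γ₀, hΓ₀, rfl⟩ := List.mem_map.1 hΓ
    obtain ⟨j₀, hj₀, rfl⟩ := Finset.mem_image.1 hj
    have hb := hw Γ₀ hΓ₀ j₀ hj₀
    rw [hP] at hb; rw [hC]
    simp only [List.length_append, List.length_cons] at *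
    simp only [insShift]
    split <;> omega
  case ogWeak =>
    obtain ⟨hpool, g₁, g₂, Γ', j', hj', hj'Γ, hPG, hCG⟩ := hr
    intro Γ hΓ j hj
    rw [hCG] at hΓ
    rw [hpool]
    simp only [List.mem_append, List.mem_cons] at hΓ
    rcases hΓ with h1 | h2 | h3
    · exact hw Γ (by rw [hPG]; simp [h1]) j hj
    · subst h2
      rcases Finset.mem_insert.1 hj with rfl | hmem
      · exact hj'
      · exact hw Γ' (by rw [hPG]; simp) j hmem
    · exact hw Γ (by rw [hPG]; simp [h3]) j hj
  case dupDown =>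
    obtain ⟨hpool, g₁, g₂, Γ', hPG, hCG⟩ := hr
    intro Γ hΓ j hj
    rw [hCG] at hΓ
    rw [hpool]
    refine hw Γ ?_ j hj
    rw [hPG]
    simp only [List.mem_append, List.mem_cons] at hΓ ⊢
    tauto
  case dupUp =>
    obtain ⟨hpool, g₁, g₂, Γ', hPG, hCG⟩ := hr
    intro Γ hΓ j hj
    rw [hCG] at hΓ
    rw [hpool]
    refine hw Γ ?_ j hj
    rw [hPG]
    simp only [List.mem_append, List.mem_cons] at hΓ ⊢
    tauto
  case orIntro =>
    obtain ⟨l₁, l₂, F, G, hP, hC, hG⟩ := hr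
    intro Γ hΓ j hj
    rw [hG] at hΓ
    obtain ⟨Γ₀, hΓ₀, rfl⟩ := List.mem_map.1 hΓ
    obtain ⟨j₀, hj₀, rfl⟩ := Finset.mem_image.1 hj
    have hb := hw Γ₀ hΓ₀ j₀ hj₀
    rw [hP] at hb; rw [hC]
    simp only [List.length_append, List.length_cons] at *
    simp only [mergeIdx]
    split <;> omega
  case andIntro =>
    obtain ⟨l₁, l₂, F, G, merged, hP, hC, hm, hG⟩ := hr
    intro Γ hΓ j hj
    rw [hG] at hΓ
    obtain ⟨Γ₀, hΓ₀, rfl⟩ := List.mem_map.1 hΓ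
    obtain ⟨j₀, hj₀, rfl⟩ := Finset.mem_image.1 hj
    obtain ⟨Γ₁, hΓ₁, hj₁⟩ := hm.mem Γ₀ hΓ₀ j₀ hj₀
    have hb := hw Γ₁ hΓ₁ j₀ hj₁
    rw [hP] at hb; rw [hC]
    simp only [List.length_append, List.length_cons] at *
    simp only [mergeIdx]
    split <;> omega
  all_goals exact absurd hr not_false

/-! ### Mix and axiom facts -/

theorem mix_plen {A B C : Cirquent} (h : MixStep A B C) : plen C = plen A + plen B := by
  obtain ⟨hp, _⟩ := h
  simp [plen, hp]

theorem mix_conn {A B C : Cirquent} (h : MixStep A B C) :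
    connSum C = connSum A + connSum B := by
  obtain ⟨hp, _⟩ := h
  simp [connSum, hp]

theorem mix_arcs {A B C : Cirquent} (h : MixStep A B C) : C.arcs = A.arcs + B.arcs := by
  obtain ⟨_, hg⟩ := h
  simp only [Cirquent.arcs, hg, List.map_append, List.sum_append]
  rw [arcs_map_inj _ _ (fun a b hab => Nat.add_right_cancel hab)]

theorem mix_glen {A B C : Cirquent} (h : MixStep A B C) :
    C.groups.length = A.groups.length + B.groups.length := by
  obtain ⟨_, hg⟩ := h
  simp [hg]

theorem mix_WF {A B C : Cirquent} (h : MixStep A B C) (hA : WF A) (hB : WF B) : WF C := by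
  obtain ⟨hp, hg⟩ := h
  intro Γ hΓ j hj
  rw [hg] at hΓ
  rw [hp]
  simp only [List.length_append]
  rcases List.mem_append.1 hΓ with h1 | h2
  · have := hA Γ h1 j hj
    omega
  · obtain ⟨Γ₀, hΓ₀, rfl⟩ := List.mem_map.1 h2
    obtain ⟨j₀, hj₀, rfl⟩ := Finset.mem_image.1 hj
    have := hB Γ₀ hΓ₀ j₀ hj₀
    omega

theorem cw_negate (F : Fml) : cw F.negate = cw F := by
  induction F <;> simp [cw, Fml.negate, Fml.nAnd, Fml.nOr] at * <;> omega

theorem empty_plen : plen emptyCirquent = 0 := rfl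
theorem empty_WF : WF emptyCirquent := by intro Γ hΓ; simp [emptyCirquent] at hΓ

theorem id_plen (F : Fml) : plen (idCirquent F) = 2 * F.len := by
  simp [plen, idCirquent, Fml.len_negate]
  omega

theorem id_conn (F : Fml) : connSum (idCirquent F) = 2 * cw F := by
  simp [connSum, idCirquent, cw_negate]
  try omega

theorem id_arcs (F : Fml) : (idCirquent F).arcs = 2 := by
  simp only [Cirquent.arcs, idCirquent, List.map_cons, List.map_nil, List.sum_cons,
    List.sum_nil]
  rfl

theorem id_glen (F : Fml) : (idCirquent F).groups.length = 1 := rfl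

theorem id_WF (F : Fml) : WF (idCirquent F) := by
  intro Γ hΓ j hj
  simp only [idCirquent, List.mem_singleton] at hΓ
  subst hΓ
  simp only [idCirquent, List.length_cons, List.length_nil]
  fin_cases hj <;> omega

/-! ### PTree basics -/

theorem PTree.concl_mem (p : PTree) : p.concl ∈ p.cirquents := by
  cases p <;> simp [PTree.concl, PTree.cirquents]

theorem dupFree_un {C : Cirquent} {r : RuleName} {p : PTree} (h : DupFree (.un C r p)) :
    r ≠ RuleName.dupDown ∧ r ≠ RuleName.dupUp ∧ DupFree p := by
  obtain ⟨h1, h2⟩ := h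
  simp only [PTree.count] at h1 h2
  constructor
  · intro rfl'; subst rfl'; simp at h1
  constructor
  · intro rfl'; subst rfl'; simp at h2
  · exact ⟨by omega, by omega⟩

theorem dupFree_bin {C : Cirquent} {r : RuleName} {p q : PTree}
    (h : DupFree (.bin C r p q)) : DupFree p ∧ DupFree q := by
  obtain ⟨h1, h2⟩ := h
  simp only [PTree.count] at h1 h2
  exact ⟨⟨by omega, by omega⟩, ⟨by omega, by omega⟩⟩

theorem dupFree_mk_un {C : Cirquent} {r : RuleName} {p : PTree}
    (h1 : r ≠ RuleName.dupDown) (h2 : r ≠ RuleName.dupUp) (h : DupFree p) :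
    DupFree (.un C r p) := by
  obtain ⟨d1, d2⟩ := h
  refine ⟨?_, ?_⟩ <;> simp [PTree.count, d1, d2, h1, h2]

theorem dupFree_mk_bin {C : Cirquent} {p q : PTree}
    (hp : DupFree p) (hq : DupFree q) : DupFree (.bin C .mix p q) := by
  obtain ⟨d1, d2⟩ := hp
  obtain ⟨e1, e2⟩ := hq
  refine ⟨?_, ?_⟩ <;> simp [PTree.count, d1, d2, e1, e2]

theorem dupFree_leaf (C : Cirquent) (r : RuleName)
    (h1 : r ≠ RuleName.dupDown) (h2 : r ≠ RuleName.dupUp) : DupFree (.leaf C r) := by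
  refine ⟨?_, ?_⟩ <;> simp [PTree.count, h1, h2]

theorem PTree.cirquents_length (p : PTree) : p.cirquents.length = p.nodes := by
  induction p <;> simp [PTree.cirquents, PTree.nodes, *] <;> omega

theorem sum_size_le (l : List Cirquent) (S : ℕ) (h : ∀ X ∈ l, X.size ≤ S) :
    (l.map Cirquent.size).sum ≤ l.length * S := by
  induction l with
  | nil => simp
  | cons a t ih =>
    simp only [List.map_cons, List.sum_cons, List.length_cons]
    have h1 := h a (List.mem_cons_self)
    have h2 := ih (fun X hX => h X (List.mem_cons_of_mem _ hX))
    have e : (t.length + 1) * S = t.length * S + S := by ring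
    omega

theorem PTree.size_le (p : PTree) (S : ℕ) (h : ∀ X ∈ p.cirquents, X.size ≤ S) :
    p.size ≤ p.nodes * S := by
  rw [← PTree.cirquents_length]
  exact sum_size_le _ _ h

/-! ### Global budget lemmas -/

def cnt (p : PTree) : ℕ :=
  p.count .orIntro + p.count .andIntro + p.count .poolWeak + p.count .ogWeak + p.count .idAx

theorem global1 (p : PTree) (hv : p.Valid) :
    ∀ X ∈ p.cirquents, plen X ≤ plen p.concl ∧ WF X := by
  induction p with
  | leaf C r =>
    intro X hX
    simp only [PTree.cirquents, List.mem_singleton] at hX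
    subst hX
    rcases hv with ⟨_, rfl⟩ | ⟨_, F, rfl⟩
    · exact ⟨le_rfl, empty_WF⟩
    · exact ⟨le_rfl, id_WF F⟩
  | un C r q ih =>
    obtain ⟨hq, hrel⟩ := hv
    intro X hX
    simp only [PTree.cirquents, List.mem_cons] at hX
    have hPC : plen q.concl ≤ plen C :=
      le_trans (Nat.le_add_right _ _) (unRel_plen hrel)
    rcases hX with rfl | hX
    · exact ⟨le_rfl, unRel_WF hrel (ih hq q.concl q.concl_mem).2⟩
    · obtain ⟨h1, h2⟩ := ih hq X hX
      exact ⟨le_trans h1 hPC, h2⟩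
  | bin C r q₁ q₂ ih₁ ih₂ =>
    obtain ⟨h1, h2, rfl, hmix⟩ := hv
    intro X hX
    simp only [PTree.cirquents, List.mem_cons, List.mem_append] at hX
    have hpl := mix_plen hmix
    rcases hX with rfl | hX | hX
    · exact ⟨le_rfl, mix_WF hmix (ih₁ h1 _ q₁.concl_mem).2 (ih₂ h2 _ q₂.concl_mem).2⟩
    · obtain ⟨a, b⟩ := ih₁ h1 X hX
      exact ⟨by simp only [PTree.concl] at *; omega, b⟩
    · obtain ⟨a, b⟩ := ih₂ h2 X hX
      exact ⟨by simp only [PTree.concl] at *; omega, b⟩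

theorem pwWt_ite (r : RuleName) : (if r = RuleName.poolWeak then 1 else 0) = pwWt r := by
  cases r <;> simp [pwWt]

theorem ogWt_ite (r : RuleName) : (if r = RuleName.ogWeak then 1 else 0) = ogWt r := by
  cases r <;> simp [ogWt]

theorem oaWt_ite (r : RuleName) :
    (if r = RuleName.orIntro then 1 else 0) + (if r = RuleName.andIntro then 1 else 0)
      = oaWt r := by
  cases r <;> simp [oaWt]

theorem pw_bound (p : PTree) (hv : p.Valid) : p.count .poolWeak ≤ plen p.concl := by
  induction p with
  | leaf C r =>
    rcases hv with ⟨rfl, rfl⟩ | ⟨rfl, F, rfl⟩ <;> simp [PTree.count]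
  | un C r q ih =>
    obtain ⟨hq, hrel⟩ := hv
    have h1 := unRel_plen hrel
    have h2 := ih hq
    simp only [PTree.count, PTree.concl, pwWt_ite] at *
    omega
  | bin C r q₁ q₂ ih₁ ih₂ =>
    obtain ⟨h1, h2, rfl, hmix⟩ := hv
    have e := mix_plen hmix
    have i1 := ih₁ h1
    have i2 := ih₂ h2
    simp only [PTree.count, PTree.concl] at *
    simp only [show (RuleName.mix = RuleName.poolWeak) = False by simp, if_false] at *
    omega

theorem idax_bound (p : PTree) (hv : p.Valid) : 2 * p.count .idAx ≤ plen p.concl := by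
  induction p with
  | leaf C r =>
    rcases hv with ⟨rfl, rfl⟩ | ⟨rfl, F, rfl⟩ <;> simp [PTree.count, PTree.concl]
    rw [id_plen]
    have := F.one_le_len
    omega
  | un C r q ih =>
    obtain ⟨hq, hrel⟩ := hv
    have h1 := unRel_plen hrel
    have h2 := ih hq
    by_cases hri : r = RuleName.idAx
    · subst hri; exact hrel.elim
    · simp only [PTree.count, PTree.concl, if_neg hri] at *
      omega
  | bin C r q₁ q₂ ih₁ ih₂ =>
    obtain ⟨h1, h2, rfl, hmix⟩ := hv
    have e := mix_plen hmix
    have i1 := ih₁ h1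
    have i2 := ih₂ h2
    simp only [PTree.count, PTree.concl] at *
    simp only [show (RuleName.mix = RuleName.idAx) = False by simp, if_false] at *
    omega

theorem conn_bound (p : PTree) (hv : p.Valid) :
    p.count .orIntro + p.count .andIntro ≤ connSum p.concl := by
  induction p with
  | leaf C r =>
    rcases hv with ⟨rfl, rfl⟩ | ⟨rfl, F, rfl⟩ <;> simp [PTree.count]
  | un C r q ih =>
    obtain ⟨hq, hrel⟩ := hv
    have h1 := unRel_conn hrel
    have h2 := ih hq
    have h3 := oaWt_ite r
    simp only [PTree.count, PTree.concl] at *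
    omega
  | bin C r q₁ q₂ ih₁ ih₂ =>
    obtain ⟨h1, h2, rfl, hmix⟩ := hv
    have e := mix_conn hmix
    have i1 := ih₁ h1
    have i2 := ih₂ h2
    simp only [PTree.count, PTree.concl] at *
    simp only [show (RuleName.mix = RuleName.orIntro) = False by simp,
      show (RuleName.mix = RuleName.andIntro) = False by simp, if_false] at *
    omega

theorem glen_bound (p : PTree) (hv : p.Valid) (hd : DupFree p) :
    ∀ X ∈ p.cirquents, X.groups.length ≤ p.count .idAx := by
  induction p with
  | leaf C r =>
    intro X hX
    simp only [PTree.cirquents, List.mem_singleton] at hX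
    subst hX
    rcases hv with ⟨rfl, rfl⟩ | ⟨rfl, F, rfl⟩ <;> simp [PTree.count, emptyCirquent, id_glen]
  | un C r q ih =>
    obtain ⟨hq, hrel⟩ := hv
    obtain ⟨hd1, hd2, hdq⟩ := dupFree_un hd
    by_cases hri : r = RuleName.idAx
    · subst hri; exact hrel.elim
    intro X hX
    simp only [PTree.cirquents, List.mem_cons] at hX
    have hcnt : PTree.count RuleName.idAx (.un C r q) = q.count .idAx := by
      simp [PTree.count, hri]
    rcases hX with rfl | hX
    · calc X.groups.length ≤ q.concl.groups.length := unRel_glen hrel hd1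
        _ ≤ q.count .idAx := ih hq hdq q.concl q.concl_mem
        _ = _ := by rw [hcnt]
    · rw [hcnt]
      exact ih hq hdq X hX
  | bin C r q₁ q₂ ih₁ ih₂ =>
    obtain ⟨h1, h2, rfl, hmix⟩ := hv
    obtain ⟨hdq₁, hdq₂⟩ := dupFree_bin hd
    intro X hX
    simp only [PTree.cirquents, List.mem_cons, List.mem_append] at hX
    have hcnt : PTree.count RuleName.idAx (.bin C .mix q₁ q₂)
        = q₁.count .idAx + q₂.count .idAx := by
      simp [PTree.count]
    rw [hcnt]
    rcases hX with rfl | hX | hX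
    · have := mix_glen hmix
      have a1 := ih₁ h1 hdq₁ _ q₁.concl_mem
      have a2 := ih₂ h2 hdq₂ _ q₂.concl_mem
      omega
    · have := ih₁ h1 hdq₁ X hX; omega
    · have := ih₂ h2 hdq₂ X hX; omega

theorem ogw_bound (p : PTree) (hv : p.Valid) (hd : DupFree p) (M : ℕ)
    (hM : ∀ X ∈ p.cirquents, X.arcs ≤ M) :
    p.count .ogWeak ≤ p.concl.arcs + (p.count .orIntro + p.count .andIntro) * M := by
  induction p with
  | leaf C r =>
    rcases hv with ⟨rfl, rfl⟩ | ⟨rfl, F, rfl⟩ <;> simp [PTree.count]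
  | un C r q ih =>
    obtain ⟨hq, hrel⟩ := hv
    obtain ⟨hd1, hd2, hdq⟩ := dupFree_un hd
    have IH := ih hq hdq (fun X hX => hM X (by simp [PTree.cirquents, List.mem_cons]; tauto))
    have hPa : q.concl.arcs ≤ M := hM q.concl (by
      simp only [PTree.cirquents, List.mem_cons]
      exact Or.inr q.concl_mem)
    cases r
    case ofExch =>
      have e := unRel_arcs hrel (Or.inl rfl)
      simp only [PTree.count, PTree.concl, ogWt] at *
      simp at *
      omega
    case ogExch =>
      have e := unRel_arcs hrel (Or.inr (Or.inl rfl))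
      simp only [PTree.count, PTree.concl, ogWt] at *
      simp at *
      omega
    case poolWeak =>
      have e := unRel_arcs hrel (Or.inr (Or.inr (Or.inl rfl)))
      simp only [PTree.count, PTree.concl, ogWt] at *
      simp at *
      omega
    case ogWeak =>
      have e := unRel_arcs hrel (Or.inr (Or.inr (Or.inr rfl)))
      simp only [PTree.count, PTree.concl, ogWt] at *
      simp at *
      omega
    case orIntro =>
      simp only [PTree.count, PTree.concl] at *
      simp at *
      nlinarith
    case andIntro =>
      simp only [PTree.count, PTree.concl] at *
      simp at *
      nlinarith
    case dupDown => exact absurd rfl hd1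
    case dupUp => exact absurd rfl hd2
    all_goals exact hrel.elim
  | bin C r q₁ q₂ ih₁ ih₂ =>
    obtain ⟨h1, h2, rfl, hmix⟩ := hv
    obtain ⟨hdq₁, hdq₂⟩ := dupFree_bin hd
    have IH₁ := ih₁ h1 hdq₁ (fun X hX => hM X (by
      simp [PTree.cirquents, List.mem_cons, List.mem_append]; tauto))
    have IH₂ := ih₂ h2 hdq₂ (fun X hX => hM X (by
      simp [PTree.cirquents, List.mem_cons, List.mem_append]; tauto))
    have e := mix_arcs hmix
    simp only [PTree.count, PTree.concl] at *
    simp at *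
    nlinarith

/-! ### Nonemptiness -/

theorem exc_prem_ne_empty {r : RuleName} {P C : Cirquent} (hrel : unRel r P C)
    (h : r = RuleName.ofExch ∨ r = RuleName.ogExch) : P ≠ emptyCirquent := by
  rcases h with rfl | rfl <;> simp only [unRel] at hrel
  · obtain ⟨l₁, l₂, F, G, hP, _, _⟩ := hrel
    intro hPe
    rw [hPe] at hP
    exact absurd hP.symm (by simp [emptyCirquent])
  · obtain ⟨_, g₁, g₂, Γ, Δ, hP, _⟩ := hrel
    intro hPe
    rw [hPe] at hP
    exact absurd hP.symm (by simp [emptyCirquent])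

theorem cnt_pos (p : PTree) (hv : p.Valid) (hd : DupFree p)
    (h : p.concl ≠ emptyCirquent) : 1 ≤ cnt p := by
  induction p with
  | leaf C r =>
    rcases hv with ⟨rfl, rfl⟩ | ⟨rfl, F, rfl⟩
    · exact absurd rfl h
    · simp [cnt, PTree.count]
  | un C r q ih =>
    obtain ⟨hq, hrel⟩ := hv
    obtain ⟨hd1, hd2, hdq⟩ := dupFree_un hd
    have hmono : cnt q ≤ cnt (.un C r q) := by
      simp only [cnt, PTree.count]
      omega
    cases r
    case ofExch =>
      have := ih hq hdq (exc_prem_ne_empty hrel (Or.inl rfl))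
      omega
    case ogExch =>
      have := ih hq hdq (exc_prem_ne_empty hrel (Or.inr rfl))
      omega
    case poolWeak =>
      simp only [cnt, PTree.count]
      simp
      omega
    case ogWeak =>
      simp only [cnt, PTree.count]
      simp
      omega
    case orIntro =>
      simp only [cnt, PTree.count]
      simp
      omega
    case andIntro =>
      simp only [cnt, PTree.count]
      simp
      omega
    case dupDown => exact absurd rfl hd1
    case dupUp => exact absurd rfl hd2
    all_goals exact hrel.elim
  | bin C r q₁ q₂ ih₁ ih₂ =>
    obtain ⟨h1, h2, rfl, hmix⟩ := hv
    obtain ⟨hdq₁, hdq₂⟩ := dupFree_bin hd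
    obtain ⟨hp, hg⟩ := hmix
    have hmono : cnt q₁ + cnt q₂ ≤ cnt (.bin C .mix q₁ q₂) := by
      simp only [cnt, PTree.count]
      omega
    by_cases e₁ : q₁.concl = emptyCirquent
    · by_cases e₂ : q₂.concl = emptyCirquent
      · exfalso
        apply h
        rw [e₁, e₂] at hp hg
        simp only [emptyCirquent] at hp hg
        simp at hp hg
        cases C
        simp only [emptyCirquent]
        simp_all
        rfl
      · have := ih₂ h2 hdq₂ e₂
        omega
    · have := ih₁ h1 hdq₁ e₁
      omega

/-! ### Chain building -/

theorem chain_build {k : ℕ} {X Y : Cirquent} (hc : ChainN k X Y) :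
    ∀ base : PTree, base.Valid → DupFree base → base.concl = X →
    ∃ q : PTree, q.Valid ∧ DupFree q ∧ q.concl = Y ∧ q.nodes = base.nodes + k ∧
      ∀ Z ∈ q.cirquents, Z ∈ base.cirquents ∨ Z.size = X.size := by
  induction hc with
  | refl X0 =>
    intro base hv hd hcc
    exact ⟨base, hv, hd, hcc, by omega, fun Z hZ => Or.inl hZ⟩
  | @head X0 Z0 Y0 k s rest ih =>
    intro base hv hd hcc
    have hstep : ∃ r, r ≠ RuleName.dupDown ∧ r ≠ RuleName.dupUp ∧ unRel r base.concl Z0 := by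
      rcases s with h | h
      · exact ⟨.ofExch, by decide, by decide, by rw [hcc]; exact h⟩
      · exact ⟨.ogExch, by decide, by decide, by rw [hcc]; exact h⟩
    obtain ⟨r, hr1, hr2, hrel⟩ := hstep
    have hv' : (PTree.un Z0 r base).Valid := ⟨hv, hrel⟩
    have hd' : DupFree (PTree.un Z0 r base) := dupFree_mk_un hr1 hr2 hd
    obtain ⟨q, a1, a2, a3, a4, a5⟩ := ih (PTree.un Z0 r base) hv' hd' rfl
    refine ⟨q, a1, a2, a3, ?_, ?_⟩
    · simp only [PTree.nodes] at a4
      omega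
    · intro Z hZ
      rcases a5 Z hZ with h | h
      · simp only [PTree.cirquents, List.mem_cons] at h
        rcases h with rfl | h
        · exact Or.inr (excStep_size s)
        · exact Or.inl h
      · exact Or.inr (h.trans (excStep_size s))

theorem reach_empty {C' : Cirquent} (h : Reach emptyCirquent C') : C' = emptyCirquent := by
  obtain ⟨σ, _, hpool, hg⟩ := reach_permRel h
  have h1 : C'.pool = [] := by rw [hpool]; rfl
  have h2 : C'.groups = [] := by
    have h3 : List.Perm [] C'.groups := hg
    exact h3.symm.eq_nil
  cases C'
  simp only [emptyCirquent] at *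
  simp_all

theorem attach {N S : ℕ} {C C' : Cirquent} (base : PTree)
    (hv : base.Valid) (hd : DupFree base) (hc : base.concl = C) (hR : Reach C C')
    (hN1 : C.pool.length ≤ N) (hN2 : C.groups.length ≤ N) (hCS : C.size ≤ S)
    (hall : ∀ Z ∈ base.cirquents, Z.size ≤ S) :
    ∃ q, q.Valid ∧ DupFree q ∧ q.concl = C' ∧ (∀ Z ∈ q.cirquents, Z.size ≤ S) ∧
      q.nodes ≤ base.nodes + 2 * N * N := by
  obtain ⟨k, hk, hchain⟩ := realize (reach_permRel hR) hN1 hN2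
  obtain ⟨q, a1, a2, a3, a4, a5⟩ := chain_build hchain base hv hd hc
  refine ⟨q, a1, a2, a3, ?_, by omega⟩
  intro Z hZ
  rcases a5 Z hZ with h | h
  · exact hall Z h
  · rw [h]; exact hCS

/-! ### The normalization theorem -/

theorem norm_empty (S : ℕ) {C' : Cirquent} (hR : Reach emptyCirquent C') :
    ∃ q : PTree, q.Valid ∧ DupFree q ∧ q.concl = C' ∧
      (∀ Z ∈ q.cirquents, Z.size ≤ S) ∧ q.nodes ≤ 1 := by
  have hC' : C' = emptyCirquent := reach_empty hR
  refine ⟨PTree.leaf emptyCirquent .emptyAx, Or.inl ⟨rfl, rfl⟩,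
    dupFree_leaf _ _ (by decide) (by decide), by rw [hC']; rfl, ?_, by simp [PTree.nodes]⟩
  intro Z hZ
  simp only [PTree.cirquents, List.mem_singleton] at hZ
  subst hZ
  show Cirquent.size emptyCirquent ≤ S
  simp [Cirquent.size, Cirquent.arcs, emptyCirquent, plen]

theorem norm_prod {N S : ℕ} {r : RuleName}
    (hrc : r = RuleName.poolWeak ∨ r = RuleName.ogWeak ∨ r = RuleName.orIntro ∨
      r = RuleName.andIntro)
    {C C' : Cirquent} {q : PTree}
    (hrel : unRel r q.concl C) (hR : Reach C C')
    (hN1 : C.pool.length ≤ N) (hN2 : C.groups.length ≤ N) (hCS : C.size ≤ S)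
    (IH : ∃ q₀ : PTree, q₀.Valid ∧ DupFree q₀ ∧ q₀.concl = q.concl ∧
      (∀ Z ∈ q₀.cirquents, Z.size ≤ S) ∧
      (q.concl = emptyCirquent → q₀.nodes ≤ 1) ∧
      (q.concl ≠ emptyCirquent → q₀.nodes + (2*N*N+2) ≤ (2*(2*N*N+2)) * cnt q)) :
    ∃ qq : PTree, qq.Valid ∧ DupFree qq ∧ qq.concl = C' ∧
      (∀ Z ∈ qq.cirquents, Z.size ≤ S) ∧
      qq.nodes + (2*N*N+2) ≤ (2*(2*N*N+2)) * cnt (PTree.un C r q) := by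
  obtain ⟨q₀, b1, b2, b3, b4, b5, b6⟩ := IH
  have hrel' : unRel r q₀.concl C := by rw [b3]; exact hrel
  have hnd1 : r ≠ RuleName.dupDown := by rcases hrc with rfl|rfl|rfl|rfl <;> decide
  have hnd2 : r ≠ RuleName.dupUp := by rcases hrc with rfl|rfl|rfl|rfl <;> decide
  obtain ⟨qq, c1, c2, c3, c4, c5⟩ := attach (N := N) (S := S) (PTree.un C r q₀) ⟨b1, hrel'⟩
    (dupFree_mk_un hnd1 hnd2 b2) rfl hR hN1 hN2 hCS (by
      intro Z hZ
      simp only [PTree.cirquents, List.mem_cons] at hZ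
      rcases hZ with rfl | h
      · exact hCS
      · exact b4 Z h)
  have hcnt : cnt q + 1 ≤ cnt (PTree.un C r q) := by
    rcases hrc with rfl|rfl|rfl|rfl <;> (simp only [cnt, PTree.count]; simp)
  simp only [PTree.nodes] at c5
  refine ⟨qq, c1, c2, c3, c4, ?_⟩
  by_cases hPe : q.concl = emptyCirquent
  · have h5 := b5 hPe
    have hE : 1 ≤ cnt (PTree.un C r q) := by omega
    have hmul : 2*(2*N*N+2) * 1 ≤ 2*(2*N*N+2) * cnt (PTree.un C r q) :=
      Nat.mul_le_mul_left _ hE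
    set P2 := 2*(2*N*N+2) * cnt (PTree.un C r q) with hP2
    set K := N * N with hK
    omega
  · have h6 := b6 hPe
    have hmul : 2*(2*N*N+2) * (cnt q + 1) ≤ 2*(2*N*N+2) * cnt (PTree.un C r q) :=
      Nat.mul_le_mul_left _ hcnt
    have hdist : 2*(2*N*N+2) * (cnt q + 1) = 2*(2*N*N+2) * cnt q + 2*(2*N*N+2) := by ring
    set P1 := 2*(2*N*N+2) * cnt q with hP1
    set P2 := 2*(2*N*N+2) * cnt (PTree.un C r q) with hP2
    set P3 := 2*(2*N*N+2) * (cnt q + 1) with hP3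
    set K := N * N with hK
    omega

theorem norm (N S : ℕ) (p : PTree) (hv : p.Valid) (hd : DupFree p)
    (H : ∀ X ∈ p.cirquents, X.pool.length ≤ N ∧ X.groups.length ≤ N ∧ X.size ≤ S) :
    ∀ C', Reach p.concl C' →
    ∃ q : PTree, q.Valid ∧ DupFree q ∧ q.concl = C' ∧
      (∀ Z ∈ q.cirquents, Z.size ≤ S) ∧
      (p.concl = emptyCirquent → q.nodes ≤ 1) ∧
      (p.concl ≠ emptyCirquent → q.nodes + (2*N*N+2) ≤ (2*(2*N*N+2)) * cnt p) := by
  induction p with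
  | leaf C r =>
    intro C' hR
    by_cases hCe : C = emptyCirquent
    · subst hCe
      obtain ⟨q, a1, a2, a3, a4, a5⟩ := norm_empty S hR
      exact ⟨q, a1, a2, a3, a4, fun _ => a5, fun hne => absurd rfl hne⟩
    · rcases hv with ⟨_, hCE⟩ | ⟨hri, F, hCid⟩
      · exact absurd hCE hCe
      · subst hri
        obtain ⟨hN1, hN2, hCS⟩ := H C (by simp [PTree.cirquents])
        obtain ⟨q, a1, a2, a3, a4, a5⟩ := attach (N := N) (S := S) (PTree.leaf C .idAx)
          (Or.inr ⟨rfl, F, hCid⟩) (dupFree_leaf _ _ (by decide) (by decide)) rfl hR hN1 hN2 hCS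
          (by intro Z hZ
              simp only [PTree.cirquents, List.mem_singleton] at hZ
              subst hZ; exact hCS)
        refine ⟨q, a1, a2, a3, a4, fun h => absurd h hCe, fun _ => ?_⟩
        have hcnt : cnt (PTree.leaf C RuleName.idAx) = 1 := by
          simp [cnt, PTree.count]
        rw [hcnt]
        simp only [PTree.nodes] at a5
        set K := N * N with hK
        omega
  | un C r q ih =>
    intro C' hR
    obtain ⟨hqv, hrel⟩ := hv
    obtain ⟨hd1, hd2, hdq⟩ := dupFree_un hd
    have Hq : ∀ X ∈ q.cirquents, X.pool.length ≤ N ∧ X.groups.length ≤ N ∧ X.size ≤ S :=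
      fun X hX => H X (by simp only [PTree.cirquents, List.mem_cons]; exact Or.inr hX)
    obtain ⟨hN1, hN2, hCS⟩ := H C (by simp [PTree.cirquents])
    by_cases hCe : C = emptyCirquent
    · obtain ⟨qq, a1, a2, a3, a4, a5⟩ := norm_empty S (by rw [← hCe]; exact hR)
      exact ⟨qq, a1, a2, a3, a4, fun _ => a5, fun hne => absurd hCe hne⟩
    · cases r with
      | ofExch =>
        have hRq : Reach q.concl C' := Relation.ReflTransGen.head (Or.inl hrel) hR
        obtain ⟨q₀, a1, a2, a3, a4, a5, a6⟩ := ih hqv hdq Hq C' hRq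
        have hne : q.concl ≠ emptyCirquent := exc_prem_ne_empty hrel (Or.inl rfl)
        have hb := a6 hne
        refine ⟨q₀, a1, a2, a3, a4, fun h => absurd h hCe, fun _ => ?_⟩
        have hcnt : cnt (PTree.un C RuleName.ofExch q) = cnt q := by
          simp [cnt, PTree.count]
        rw [hcnt]
        exact hb
      | ogExch =>
        have hRq : Reach q.concl C' := Relation.ReflTransGen.head (Or.inr hrel) hR
        obtain ⟨q₀, a1, a2, a3, a4, a5, a6⟩ := ih hqv hdq Hq C' hRq
        have hne : q.concl ≠ emptyCirquent := exc_prem_ne_empty hrel (Or.inr rfl)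
        have hb := a6 hne
        refine ⟨q₀, a1, a2, a3, a4, fun h => absurd h hCe, fun _ => ?_⟩
        have hcnt : cnt (PTree.un C RuleName.ogExch q) = cnt q := by
          simp [cnt, PTree.count]
        rw [hcnt]
        exact hb
      | poolWeak =>
        obtain ⟨qq, c1, c2, c3, c4, c5⟩ := norm_prod (Or.inl rfl) hrel hR hN1 hN2 hCS
          (ih hqv hdq Hq q.concl Relation.ReflTransGen.refl)
        exact ⟨qq, c1, c2, c3, c4, fun h => absurd h hCe, fun _ => c5⟩
      | ogWeak =>
        obtain ⟨qq, c1, c2, c3, c4, c5⟩ := norm_prod (Or.inr (Or.inl rfl)) hrel hR hN1 hN2 hCS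
          (ih hqv hdq Hq q.concl Relation.ReflTransGen.refl)
        exact ⟨qq, c1, c2, c3, c4, fun h => absurd h hCe, fun _ => c5⟩
      | orIntro =>
        obtain ⟨qq, c1, c2, c3, c4, c5⟩ := norm_prod (Or.inr (Or.inr (Or.inl rfl))) hrel hR
          hN1 hN2 hCS (ih hqv hdq Hq q.concl Relation.ReflTransGen.refl)
        exact ⟨qq, c1, c2, c3, c4, fun h => absurd h hCe, fun _ => c5⟩
      | andIntro =>
        obtain ⟨qq, c1, c2, c3, c4, c5⟩ := norm_prod (Or.inr (Or.inr (Or.inr rfl))) hrel hR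
          hN1 hN2 hCS (ih hqv hdq Hq q.concl Relation.ReflTransGen.refl)
        exact ⟨qq, c1, c2, c3, c4, fun h => absurd h hCe, fun _ => c5⟩
      | dupDown => exact absurd rfl hd1
      | dupUp => exact absurd rfl hd2
      | emptyAx => exact hrel.elim
      | idAx => exact hrel.elim
      | mix => exact hrel.elim
  | bin C r q₁ q₂ ih₁ ih₂ =>
    intro C' hR
    obtain ⟨hv1, hv2, hrr, hmix⟩ := hv
    subst hrr
    obtain ⟨hdq₁, hdq₂⟩ := dupFree_bin hd
    have Hq₁ : ∀ X ∈ q₁.cirquents, X.pool.length ≤ N ∧ X.groups.length ≤ N ∧ X.size ≤ S :=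
      fun X hX => H X (by
        simp only [PTree.cirquents, List.mem_cons, List.mem_append]; tauto)
    have Hq₂ : ∀ X ∈ q₂.cirquents, X.pool.length ≤ N ∧ X.groups.length ≤ N ∧ X.size ≤ S :=
      fun X hX => H X (by
        simp only [PTree.cirquents, List.mem_cons, List.mem_append]; tauto)
    obtain ⟨hN1, hN2, hCS⟩ := H C (by simp [PTree.cirquents])
    by_cases hCe : C = emptyCirquent
    · obtain ⟨qq, a1, a2, a3, a4, a5⟩ := norm_empty S (by rw [← hCe]; exact hR)
      exact ⟨qq, a1, a2, a3, a4, fun _ => a5, fun hne => absurd hCe hne⟩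
    · obtain ⟨hp, hg⟩ := hmix
      have hcntbin : cnt (PTree.bin C RuleName.mix q₁ q₂) = cnt q₁ + cnt q₂ := by
        simp only [cnt, PTree.count]
        simp
        omega
      by_cases e₁ : q₁.concl = emptyCirquent
      · have hCq : C = q₂.concl := by
          have hp' : C.pool = q₂.concl.pool := by
            rw [hp, e₁]
            rfl
          have hg' : C.groups = q₂.concl.groups := by
            rw [hg, e₁]
            show List.map (Finset.image (· + (emptyCirquent.pool.length))) q₂.concl.groups = _
            have : ∀ S : Finset ℕ, S.image (· + (emptyCirquent.pool.length)) = S := by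
              intro S
              simp [emptyCirquent]
            rw [(List.map_congr_left (fun S _ => this S)).trans (List.map_id _)]
          cases C
          cases hq2 : q₂.concl
          simp_all
        obtain ⟨qq, a1, a2, a3, a4, a5, a6⟩ := ih₂ hv2 hdq₂ Hq₂ C' (by rw [← hCq]; exact hR)
        have hne : q₂.concl ≠ emptyCirquent := by rw [← hCq]; exact hCe
        have hb := a6 hne
        refine ⟨qq, a1, a2, a3, a4, fun h => absurd h hCe, fun _ => ?_⟩
        rw [hcntbin]
        have hmul : (2*(2*N*N+2)) * cnt q₂ ≤ (2*(2*N*N+2)) * (cnt q₁ + cnt q₂) :=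
          Nat.mul_le_mul_left _ (by omega)
        omega
      · by_cases e₂ : q₂.concl = emptyCirquent
        · have hCq : C = q₁.concl := by
            have hp' : C.pool = q₁.concl.pool := by
              rw [hp, e₂]
              show q₁.concl.pool ++ emptyCirquent.pool = _
              simp [emptyCirquent]
            have hg' : C.groups = q₁.concl.groups := by
              rw [hg, e₂]
              show q₁.concl.groups ++ List.map _ emptyCirquent.groups = _
              simp [emptyCirquent]
            cases C
            cases hq1 : q₁.concl
            simp_all
          obtain ⟨qq, a1, a2, a3, a4, a5, a6⟩ := ih₁ hv1 hdq₁ Hq₁ C' (by rw [← hCq]; exact hR)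
          have hne : q₁.concl ≠ emptyCirquent := by rw [← hCq]; exact hCe
          have hb := a6 hne
          refine ⟨qq, a1, a2, a3, a4, fun h => absurd h hCe, fun _ => ?_⟩
          rw [hcntbin]
          have hmul : (2*(2*N*N+2)) * cnt q₁ ≤ (2*(2*N*N+2)) * (cnt q₁ + cnt q₂) :=
            Nat.mul_le_mul_left _ (by omega)
          omega
        · obtain ⟨p₁, b1, b2, b3, b4, b5, b6⟩ :=
            ih₁ hv1 hdq₁ Hq₁ q₁.concl Relation.ReflTransGen.refl
          obtain ⟨p₂, d1, d2, d3, d4, d5, d6⟩ :=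
            ih₂ hv2 hdq₂ Hq₂ q₂.concl Relation.ReflTransGen.refl
          have hb1 := b6 e₁
          have hb2 := d6 e₂
          have hmix' : MixStep p₁.concl p₂.concl C := by
            rw [b3, d3]; exact ⟨hp, hg⟩
          obtain ⟨qq, c1, c2, c3, c4, c5⟩ := attach (N := N) (S := S)
            (PTree.bin C .mix p₁ p₂) ⟨b1, d1, rfl, hmix'⟩ (dupFree_mk_bin b2 d2) rfl hR
            hN1 hN2 hCS (by
              intro Z hZ
              simp only [PTree.cirquents, List.mem_cons, List.mem_append] at hZ
              rcases hZ with rfl | h | h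
              · exact hCS
              · exact b4 Z h
              · exact d4 Z h)
          refine ⟨qq, c1, c2, c3, c4, fun h => absurd h hCe, fun _ => ?_⟩
          rw [hcntbin]
          simp only [PTree.nodes] at c5
          have hdist : (2*(2*N*N+2)) * (cnt q₁ + cnt q₂)
              = (2*(2*N*N+2)) * cnt q₁ + (2*(2*N*N+2)) * cnt q₂ := by ring
          set P1 := (2*(2*N*N+2)) * cnt q₁ with hP1
          set P2 := (2*(2*N*N+2)) * cnt q₂ with hP2
          set P3 := (2*(2*N*N+2)) * (cnt q₁ + cnt q₂) with hP3
          set K := N * N with hK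
          omega

/-! ### Final pieces -/

theorem sum_card_le (gs : List (Finset ℕ)) (c : ℕ) (h : ∀ Γ ∈ gs, Γ.card ≤ c) :
    (gs.map Finset.card).sum ≤ gs.length * c := by
  induction gs with
  | nil => simp
  | cons a t ih =>
    simp only [List.map_cons, List.sum_cons, List.length_cons]
    have h1 := h a (List.mem_cons_self)
    have h2 := ih (fun Γ hΓ => h Γ (List.mem_cons_of_mem _ hΓ))
    have e : (t.length + 1) * c = t.length * c + c := by ring
    omega

theorem arcs_le_of_WF (X : Cirquent) (h : WF X) :
    X.arcs ≤ X.groups.length * X.pool.length := by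
  unfold Cirquent.arcs
  apply sum_card_le
  intro Γ hΓ
  have hsub : Γ ⊆ Finset.range X.pool.length := by
    intro j hj
    exact Finset.mem_range.2 (h Γ hΓ j hj)
  simpa using Finset.card_le_card hsub

theorem main_result (F : Fml) (h : ProvesCL5m F) :
    ∃ q : PTree, q.Valid ∧ DupFree q ∧ q.concl = fmlCirquent F ∧
      q.size ≤ 80 * F.len ^ 7 := by
  obtain ⟨p, hv, hd, hconcl⟩ := h
  set n := F.len with hn
  have hn1 : 1 ≤ n := F.one_le_len
  have hroot_plen : plen p.concl = n := by
    rw [hconcl]; simp [plen, fmlCirquent, hn]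
  have hroot_arcs : p.concl.arcs = 1 := by
    rw [hconcl]; simp [Cirquent.arcs, fmlCirquent]
  have hroot_conn : connSum p.concl ≤ n := by
    rw [hconcl]
    show (List.map cw [F]).sum ≤ n
    simpa using cw_le_len F
  have hG1 := global1 p hv
  have hidax : 2 * p.count .idAx ≤ n := by
    rw [← hroot_plen]; exact idax_bound p hv
  have hglen := glen_bound p hv hd
  have Harc : ∀ X ∈ p.cirquents, X.arcs ≤ n * n := by
    intro X hX
    obtain ⟨h1, h2⟩ := hG1 X hX
    have hpl : X.pool.length ≤ n :=
      le_trans (length_le_plen X.pool) (by rw [← hroot_plen]; exact h1)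
    have hgl : X.groups.length ≤ n := le_trans (hglen X hX) (by omega)
    exact le_trans (arcs_le_of_WF X h2) (Nat.mul_le_mul hgl hpl)
  have Hmain : ∀ X ∈ p.cirquents, X.pool.length ≤ n ∧ X.groups.length ≤ n ∧
      X.size ≤ n + n * n := by
    intro X hX
    obtain ⟨h1, h2⟩ := hG1 X hX
    have hpl : X.pool.length ≤ n :=
      le_trans (length_le_plen X.pool) (by rw [← hroot_plen]; exact h1)
    have hgl : X.groups.length ≤ n := le_trans (hglen X hX) (by omega)
    have harc := Harc X hX
    refine ⟨hpl, hgl, ?_⟩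
    have hps : (X.pool.map Fml.len).sum ≤ n := by
      have := h1
      simp only [plen] at this hroot_plen
      omega
    simp only [Cirquent.size]
    omega
  have hoa : p.count .orIntro + p.count .andIntro ≤ n :=
    le_trans (conn_bound p hv) hroot_conn
  have hogw : p.count .ogWeak ≤ 1 + n * (n * n) := by
    have h := ogw_bound p hv hd (n * n) Harc
    have h2 : (p.count .orIntro + p.count .andIntro) * (n * n) ≤ n * (n * n) :=
      Nat.mul_le_mul_right _ hoa
    omega
  have hpw : p.count .poolWeak ≤ n := by
    rw [← hroot_plen]; exact pw_bound p hv
  have hcnt : cnt p ≤ n + n + 1 + n * (n * n) + n := by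
    simp only [cnt]
    omega
  obtain ⟨q, a1, a2, a3, a4, a5, a6⟩ :=
    norm n (n + n * n) p hv hd Hmain p.concl Relation.ReflTransGen.refl
  have hne : p.concl ≠ emptyCirquent := by
    rw [hconcl]
    intro h
    have := congrArg Cirquent.pool h
    simp [fmlCirquent, emptyCirquent] at this
  have hnodes := a6 hne
  have hsize : q.size ≤ q.nodes * (n + n * n) := PTree.size_le q _ a4
  have e0 : q.nodes ≤ 2 * (2*n*n+2) * cnt p :=
    le_trans (Nat.le_add_right q.nodes _) hnodes
  have m1 : 2 * (2*n*n+2) * cnt p ≤ 2 * (2*n*n+2) * (n + n + 1 + n * (n * n) + n) :=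
    Nat.mul_le_mul_left _ hcnt
  have hnn : 1 ≤ n * n := Nat.one_le_iff_ne_zero.2 (by positivity)
  have hn3 : n ≤ n * (n * n) := by
    calc n = n * 1 := by ring
      _ ≤ n * (n * n) := Nat.mul_le_mul_left _ hnn
  have hb1 : 2 * n * n = 2 * (n * n) := by ring
  have s1 : 2 * (2*n*n+2) ≤ 8 * (n*n) := by omega
  have s2 : n + n + 1 + n * (n * n) + n ≤ 5 * (n * (n * n)) := by omega
  have s3 : n + n * n ≤ 2 * (n * n) := by
    have : n ≤ n * n := by
      calc n = n * 1 := by ring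
        _ ≤ n * n := Nat.mul_le_mul_left _ hn1
    omega
  have e1 : q.nodes ≤ 8 * (n*n) * (5 * (n * (n * n))) :=
    le_trans (le_trans e0 m1) (Nat.mul_le_mul s1 s2)
  have e2 : q.size ≤ 8 * (n*n) * (5 * (n * (n * n))) * (2 * (n * n)) :=
    le_trans hsize (Nat.mul_le_mul e1 s3)
  have efin : 8 * (n*n) * (5 * (n * (n * n))) * (2 * (n * n)) = 80 * n ^ 7 := by ring
  refine ⟨q, a1, a2, a3.trans hconcl, ?_⟩
  rw [← efin]
  exact e2

end CirquentCalc
open CirquentCalc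

/-- There is a polynomial p such that every formula F provable in
CL5⁻ of length k has a CL5⁻ proof of size at most p(k). -/
theorem cl5m_polysize_proofs :
    ∃ P : Polynomial ℕ, ∀ F : Fml, ProvesCL5m F →
      ∃ p : PTree, p.Valid ∧ DupFree p ∧ p.concl = fmlCirquent F ∧
        p.size ≤ P.eval F.len := by
  refine ⟨Polynomial.C 80 * Polynomial.X ^ 7, ?_⟩
  intro F hF
  obtain ⟨q, a1, a2, a3, a4⟩ := CirquentCalc.main_result F hF
  refine ⟨q, a1, a2, a3, ?_⟩
  simpa using a4
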